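/- arXiv:2402.13675 — 2 statements merged into one kernel-verified Lean document; each statement's English description precedes it below -/
import Mathlib

section
/- Let $G(x_1,\dots,x_m)=\sum_{\upsilon_1,\dots,\upsilon_m\in\{0,1\}} g_{\upsilon_1,\dots,\upsilon_m} x_1^{\upsilon_1}\cdots x_m^{\upsilon_m}$ be a multilinear polynomial with real coefficients. Then for any real numbers $0<t_{i,0}<t_{i,1}$ for $i=1,\dots,m$, one has $\sum_{\upsilon_1,\dots,\upsilon_m\in\{0,1\}} |g_{\upsilon_1,\dots,\upsilon_m}| \le \prod_{i=1}^m \frac{1+t_{i,1}}{t_{i,1}-t_{i,0}} \sum_{\upsilon_1,\dots,\upsilon_m\in\{0,1\}} |G(t_{1,\upsilon_1},\dots,t_{m,\upsilon_m})|.$ -/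
open Finset

lemma scalar_bound (a b t0 t1 : ℝ) (h0 : 0 < t0) (h : t0 < t1) :
    |a| + |b| ≤ (1 + t1) / (t1 - t0) * (|a + b * t0| + |a + b * t1|) := by
  rw [div_mul_eq_mul_div, le_div_iff₀ (by linarith)]
  have h1 := le_abs_self (a + b * t0)
  have h2 := neg_abs_le (a + b * t0)
  have h3 := le_abs_self (a + b * t1)
  have h4 := neg_abs_le (a + b * t1)
  rcases abs_cases a with ⟨ha, _⟩ | ⟨ha, _⟩ <;>
    rcases abs_cases b with ⟨hb, _⟩ | ⟨hb, _⟩ <;> nlinarith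

lemma sum_split_bool {m : ℕ} (f : (Fin (m + 1) → Bool) → ℝ) :
    ∑ υ : Fin (m + 1) → Bool, f υ =
      ∑ υ' : Fin m → Bool, (f (Fin.cons false υ') + f (Fin.cons true υ')) := by
  rw [← (Fin.consEquiv (fun _ : Fin (m + 1) => Bool)).sum_comp f, Fintype.sum_prod_type,
    Fintype.sum_bool, ← Finset.sum_add_distrib]
  simp [Fin.consEquiv, add_comm]

/-- Inequality bounding the coefficient sum of a multilinear polynomial by its
values at `2^m` points. -/
theorem multilinear_coeff_bound (m : ℕ) (g : (Fin m → Bool) → ℝ) (t : Fin m → Bool → ℝ)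
    (ht0 : ∀ i, 0 < t i false) (ht : ∀ i, t i false < t i true) :
    ∑ υ : Fin m → Bool, |g υ| ≤
      (∏ i, (1 + t i true) / (t i true - t i false)) *
        ∑ υ : Fin m → Bool,
          |∑ w : Fin m → Bool, g w * ∏ i, (if w i then t i (υ i) else 1)| := by
  induction m with
  | zero => simp
  | succ m ih =>
    set t' : Fin m → Bool → ℝ := fun i b => t i.succ b with ht'def
    have ht0' : ∀ i, 0 < t' i false := fun i => ht0 i.succ
    have htlt' : ∀ i, t' i false < t' i true := fun i => ht i.succ
    set F : ((Fin m → Bool) → ℝ) → (Fin m → Bool) → ℝ :=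
      fun gg υ' => ∑ w' : Fin m → Bool, gg w' * ∏ i, (if w' i then t' i (υ' i) else 1)
      with hFdef
    set g0 : (Fin m → Bool) → ℝ := fun w' => g (Fin.cons false w') with hg0
    set g1 : (Fin m → Bool) → ℝ := fun w' => g (Fin.cons true w') with hg1
    set inner : (Fin (m + 1) → Bool) → ℝ :=
      fun υ => ∑ w : Fin (m + 1) → Bool, g w * ∏ i, (if w i then t i (υ i) else 1)
      with hinner
    have value_split : ∀ (c : Bool) (υ' : Fin m → Bool),
        inner (Fin.cons c υ') = F g0 υ' + F g1 υ' * t 0 c := by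
      intro c υ'
      simp only [hinner]
      rw [sum_split_bool (fun w => g w * ∏ i, (if w i then t i ((Fin.cons c υ' : Fin (m+1) → Bool) i) else 1))]
      rw [hFdef]
      simp only [Fin.prod_univ_succ, Fin.cons_zero, Fin.cons_succ]
      rw [Finset.sum_mul, ← Finset.sum_add_distrib]
      congr 1
      ext w'
      simp only [hg0, hg1, ht'def]
      norm_num
      ring
    set C0 : ℝ := (1 + t 0 true) / (t 0 true - t 0 false) with hC0
    set C' : ℝ := ∏ i : Fin m, (1 + t' i true) / (t' i true - t' i false) with hC'
    have hC'pos : 0 < C' := by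
      apply Finset.prod_pos
      intro i _
      have h1 := ht0' i
      have h2 := htlt' i
      apply div_pos <;> linarith
    have step1 : ∑ υ : Fin (m + 1) → Bool, |g υ| ≤
        C' * ∑ υ' : Fin m → Bool, (|F g0 υ'| + |F g1 υ'|) := by
      rw [sum_split_bool (fun υ => |g υ|), mul_sum]
      rw [Finset.sum_add_distrib]
      have h0 := ih g0 t' ht0' htlt'
      have h1 := ih g1 t' ht0' htlt'
      calc ∑ υ' : Fin m → Bool, |g0 υ'| + ∑ υ' : Fin m → Bool, |g1 υ'|
          ≤ C' * ∑ υ' : Fin m → Bool, |F g0 υ'| + C' * ∑ υ' : Fin m → Bool, |F g1 υ'| := by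
            exact add_le_add h0 h1
        _ = ∑ υ' : Fin m → Bool, C' * (|F g0 υ'| + |F g1 υ'|) := by
            rw [mul_sum, mul_sum, ← Finset.sum_add_distrib]
            congr 1; ext υ'; ring
    have step2 : ∀ υ' : Fin m → Bool,
        |F g0 υ'| + |F g1 υ'| ≤
          C0 * (|inner (Fin.cons false υ')| + |inner (Fin.cons true υ')|) := by
      intro υ'
      rw [value_split, value_split, hC0]
      exact scalar_bound (F g0 υ') (F g1 υ') (t 0 false) (t 0 true) (ht0 0) (ht 0)
    have step3 : ∑ υ' : Fin m → Bool, (|F g0 υ'| + |F g1 υ'|) ≤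
        C0 * ∑ υ : Fin (m + 1) → Bool, |inner υ| := by
      rw [sum_split_bool (fun υ => |inner υ|), mul_sum]
      exact Finset.sum_le_sum fun υ' _ => step2 υ'
    calc ∑ υ : Fin (m + 1) → Bool, |g υ|
        ≤ C' * ∑ υ' : Fin m → Bool, (|F g0 υ'| + |F g1 υ'|) := step1
      _ ≤ C' * (C0 * ∑ υ : Fin (m + 1) → Bool, |inner υ|) := by
          exact mul_le_mul_of_nonneg_left step3 hC'pos.le
      _ = (∏ i : Fin (m + 1), (1 + t i true) / (t i true - t i false)) *
            ∑ υ : Fin (m + 1) → Bool, |inner υ| := by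
          rw [Fin.prod_univ_succ]
          ring
end

section
/- Let $\kappa$ and $\kappa'$ be probability measures on $\{0,1\}^m$. For any real numbers $0<t_{i,0}<t_{i,1}$, $i=1,\dots,m$, the total variation distance satisfies $d_{TV}(\kappa,\kappa') \le \frac{1}{2}\prod_{i=1}^m\frac{1+t_{i,1}}{t_{i,1}-t_{i,0}}\sum_{\upsilon_1,\dots,\upsilon_m\in\{0,1\}}\left|\mathbb{E}_{\kappa}\left[\prod_{i=1}^m t_{i,\upsilon_i}^{\tau_i}\right]-\mathbb{E}_{\kappa'}\left[\prod_{i=1}^m t_{i,\upsilon_i}^{\tau_i}\right]\right|$, where $\tau_i\in\{0,1\}$ denotes the $i$-th coordinate. -/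
open Finset

/-- Bound on the total variation distance of two probability measures on `{0,1}^m`
by differences of their joint generating functions. -/
theorem tv_distance_le_generating_functions (m : ℕ) (κ κ' : (Fin m → Bool) → ℝ)
    (hκ : ∀ x, 0 ≤ κ x) (hκ' : ∀ x, 0 ≤ κ' x)
    (hs : ∑ x, κ x = 1) (hs' : ∑ x, κ' x = 1)
    (t : Fin m → Bool → ℝ) (ht0 : ∀ i, 0 < t i false) (ht : ∀ i, t i false < t i true) :
    (1/2) * ∑ x, |κ x - κ' x| ≤
      (1/2) * (∏ i, (1 + t i true) / (t i true - t i false)) *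
        ∑ υ : Fin m → Bool,
          |(∑ τ, κ τ * ∏ i, (if τ i then t i (υ i) else 1)) -
            ∑ τ, κ' τ * ∏ i, (if τ i then t i (υ i) else 1)| := by
  have hd : ∀ i, 0 < t i true - t i false := fun i => sub_pos.2 (ht i)
  set f : (Fin m → Bool) → ℝ := fun τ => κ τ - κ' τ with hfdef
  set a : Fin m → Bool → Bool → ℝ := fun i τb υb =>
    (if τb then (if υb then 1 else -1) else (if υb then -(t i false) else t i true))
      / (t i true - t i false) with hadef
  set g : (Fin m → Bool) → ℝ :=
    fun υ => ∑ τ, f τ * ∏ i, (if τ i then t i (υ i) else 1) with hgdef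
  -- key: sums over functions factor
  have key : ∀ (F : Fin m → Bool → ℝ),
      ∑ υ : Fin m → Bool, ∏ i, F i (υ i) = ∏ i, ∑ b, F i b := by
    intro F
    rw [Finset.prod_univ_sum, Fintype.piFinset_univ]
  have hinv : ∀ (i : Fin m) (τb σb : Bool),
      ∑ υb, a i τb υb * (if σb then t i υb else 1) = if τb = σb then 1 else 0 := by
    intro i τb σb
    have hne := (hd i).ne'
    cases τb <;> cases σb <;>
      · simp only [hadef, Fintype.sum_bool, if_true, if_false, Bool.false_eq_true,
          Bool.true_eq_false, reduceIte]
        field_simp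
        try ring
  have hf : ∀ τ, f τ = ∑ υ, (∏ i, a i (τ i) (υ i)) * g υ := by
    intro τ
    have c1 : ∑ υ : Fin m → Bool, (∏ i, a i (τ i) (υ i)) * g υ
        = ∑ υ : Fin m → Bool, ∑ σ : Fin m → Bool,
            f σ * ∏ i, (a i (τ i) (υ i) * (if σ i then t i (υ i) else 1)) := by
      refine Finset.sum_congr rfl fun υ _ => ?_
      rw [hgdef, Finset.mul_sum]
      refine Finset.sum_congr rfl fun σ _ => ?_
      rw [Finset.prod_mul_distrib]; ring
    have c2 : ∑ υ : Fin m → Bool, ∑ σ : Fin m → Bool,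
            f σ * ∏ i, (a i (τ i) (υ i) * (if σ i then t i (υ i) else 1))
        = ∑ σ : Fin m → Bool, ∑ υ : Fin m → Bool,
            f σ * ∏ i, (a i (τ i) (υ i) * (if σ i then t i (υ i) else 1)) :=
      Finset.sum_comm
    have c3 : ∀ σ : Fin m → Bool, ∑ υ : Fin m → Bool,
            f σ * ∏ i, (a i (τ i) (υ i) * (if σ i then t i (υ i) else 1))
        = f σ * (if τ = σ then 1 else 0) := by
      intro σ
      rw [← Finset.mul_sum, key fun i b => a i (τ i) b * (if σ i then t i b else 1)]
      congr 1
      simp only [hinv]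
      rw [Finset.prod_boole]
      simp [funext_iff]
    rw [c1, c2]
    simp only [c3]
    simp [mul_ite]
  have hC : ∀ i, (0:ℝ) ≤ (1 + t i true) / (t i true - t i false) := by
    intro i
    have h1 : 0 < t i true := (ht0 i).trans (ht i)
    exact div_nonneg (by linarith) (hd i).le
  have habs : ∀ (i : Fin m) (υb : Bool),
      ∑ b, |a i b υb| ≤ (1 + t i true) / (t i true - t i false) := by
    intro i υb
    have hdi := hd i
    have h0 := ht0 i
    have h1 : 0 < t i true := h0.trans (ht i)
    cases υb <;>
      simp only [hadef, Fintype.sum_bool, if_true, if_false, Bool.false_eq_true, reduceIte,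
        abs_div, abs_of_pos hdi, abs_one, abs_neg, abs_of_pos h0, abs_of_pos h1] <;>
      rw [← add_div, div_le_div_iff₀ hdi hdi] <;> nlinarith
  -- main bound
  have main : ∑ x, |f x| ≤
      (∏ i, (1 + t i true) / (t i true - t i false)) * ∑ υ, |g υ| := by
    have b1 : ∑ x, |f x| ≤ ∑ x : Fin m → Bool, ∑ υ : Fin m → Bool,
        (∏ i, |a i (x i) (υ i)|) * |g υ| := by
      refine Finset.sum_le_sum fun x _ => ?_
      rw [hf x]
      refine (Finset.abs_sum_le_sum_abs _ _).trans ?_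
      refine Finset.sum_le_sum fun υ _ => ?_
      rw [abs_mul, Finset.abs_prod]
    have b2 : ∑ x : Fin m → Bool, ∑ υ : Fin m → Bool,
          (∏ i, |a i (x i) (υ i)|) * |g υ|
        = ∑ υ : Fin m → Bool, ∑ x : Fin m → Bool,
          (∏ i, |a i (x i) (υ i)|) * |g υ| := Finset.sum_comm
    have b3 : ∀ υ : Fin m → Bool, ∑ x : Fin m → Bool,
          (∏ i, |a i (x i) (υ i)|) * |g υ|
        ≤ (∏ i, (1 + t i true) / (t i true - t i false)) * |g υ| := by
      intro υ
      rw [← Finset.sum_mul]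
      refine mul_le_mul_of_nonneg_right ?_ (abs_nonneg _)
      rw [key fun i b => |a i b (υ i)|]
      refine Finset.prod_le_prod (fun i _ => ?_) (fun i _ => habs i (υ i))
      positivity
    calc ∑ x, |f x| ≤ _ := b1
      _ = _ := b2
      _ ≤ ∑ υ, (∏ i, (1 + t i true) / (t i true - t i false)) * |g υ| :=
          Finset.sum_le_sum fun υ _ => b3 υ
      _ = _ := by rw [Finset.mul_sum]
  have hgeq : ∀ υ, g υ = (∑ τ, κ τ * ∏ i, (if τ i then t i (υ i) else 1)) -
      ∑ τ, κ' τ * ∏ i, (if τ i then t i (υ i) else 1) := by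
    intro υ
    rw [hgdef, ← Finset.sum_sub_distrib]
    refine Finset.sum_congr rfl fun τ _ => ?_
    rw [hfdef, sub_mul]
  calc (1/2) * ∑ x, |κ x - κ' x| = (1/2) * ∑ x, |f x| := rfl
    _ ≤ (1/2) * ((∏ i, (1 + t i true) / (t i true - t i false)) * ∑ υ, |g υ|) := by
        linarith [main]
    _ = _ := by
        rw [mul_assoc]
        congr 1
        congr 1
        exact Finset.sum_congr rfl fun υ _ => by rw [hgeq υ]
end
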